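/- Every natural number n can be written uniquely as a sum of distinct Tribonacci numbers T(i) with i≥2, such that no three consecutive Tribonacci numbers are used (i.e., there is no index j with T(j), T(j+1), T(j+2) all appearing in the representation). -/

import Mathlib

def trib : ℕ → ℕ
  | 0 => 0
  | 1 => 1
  | 2 => 1
  | (n+3) => trib (n+2) + trib (n+1) + trib n

lemma trib_le_succ (n : ℕ) : trib n ≤ trib (n+1) := by
  match n with
  | 0 => simp [trib]
  | 1 => simp [trib]
  | (m+2) =>
    show trib (m+2) ≤ trib (m+3)
    simp only [trib]
    omega

lemma trib_mono : Monotone trib := monotone_nat_of_le_succ trib_le_succ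

lemma trib_pos {n : ℕ} (h : 1 ≤ n) : 1 ≤ trib n := by
  have := trib_mono h
  simpa [trib] using this

lemma trib_lt_succ {n : ℕ} (h : 2 ≤ n) : trib n < trib (n+1) := by
  obtain ⟨m, rfl⟩ : ∃ m, n = m + 2 := ⟨n - 2, by omega⟩
  have h1 : 1 ≤ trib (m+1) := trib_pos (by omega)
  show trib (m+2) < trib (m+3)
  simp only [trib]
  omega

lemma trib_big (n : ℕ) : n + 1 ≤ trib (n + 2) := by
  induction n with
  | zero => simp [trib]
  | succ m ih =>
    have h := trib_lt_succ (n := m+2) (by omega)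
    have h2 : trib (m+2+1) = trib (m+1+2) := rfl
    omega

lemma trib_add_le (m : ℕ) : trib (m+1) + trib m ≤ trib (m+2) := by
  match m with
  | 0 => simp [trib]
  | (q+1) =>
    show trib (q+2) + trib (q+1) ≤ trib (q+3)
    simp only [trib]
    omega

lemma sum_lt_trib : ∀ k : ℕ, ∀ S : Finset ℕ, (∀ i ∈ S, 2 ≤ i) → (∀ i ∈ S, i ≤ k) →
    (∀ j, ¬(j ∈ S ∧ j+1 ∈ S ∧ j+2 ∈ S)) → ∑ i ∈ S, trib i < trib (k+1) := by
  intro k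
  induction k using Nat.strong_induction_on with
  | _ k ih =>
  intro S h2 hk hc
  by_cases hkS : k ∈ S
  · obtain ⟨m, rfl⟩ : ∃ m, k = m + 2 := ⟨k - 2, by have := h2 k hkS; omega⟩
    have e1 : trib (m+2) + ∑ i ∈ S.erase (m+2), trib i = ∑ i ∈ S, trib i :=
      Finset.add_sum_erase _ _ hkS
    by_cases hm1 : m + 1 ∈ S
    · obtain ⟨p, rfl⟩ : ∃ p, m = p + 1 := ⟨m - 1, by have := h2 _ hm1; omega⟩
      have hmS : p + 1 ∉ S := fun h => hc (p+1) ⟨h, hm1, hkS⟩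
      have hm1' : p + 2 ∈ S.erase (p+3) := Finset.mem_erase.mpr ⟨by omega, hm1⟩
      have e2 : trib (p+2) + ∑ i ∈ (S.erase (p+3)).erase (p+2), trib i
          = ∑ i ∈ S.erase (p+3), trib i := Finset.add_sum_erase _ _ hm1'
      have hb : ∀ i ∈ (S.erase (p+3)).erase (p+2), i ≤ p := by
        intro i hi
        have h1 := Finset.mem_erase.mp hi
        have h2' := Finset.mem_erase.mp h1.2
        have h3 := hk i h2'.2
        have : i ≠ p + 1 := fun h => hmS (h ▸ h2'.2)
        omega
      have hlt := ih p (by omega) ((S.erase (p+3)).erase (p+2))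
        (fun i hi => h2 i (Finset.mem_of_mem_erase (Finset.mem_of_mem_erase hi))) hb
        (fun j hj => hc j ⟨Finset.mem_of_mem_erase (Finset.mem_of_mem_erase hj.1),
          Finset.mem_of_mem_erase (Finset.mem_of_mem_erase hj.2.1),
          Finset.mem_of_mem_erase (Finset.mem_of_mem_erase hj.2.2)⟩)
      have ht : trib (p+1+2+1) = trib (p+3) + trib (p+2) + trib (p+1) := rfl
      have b1 : trib (p+1+2) = trib (p+3) := rfl
      have b2 : (∑ i ∈ S.erase (p+1+2), trib i) = ∑ i ∈ S.erase (p+3), trib i := rfl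
      omega
    · have hb : ∀ i ∈ S.erase (m+2), i ≤ m := by
        intro i hi
        have h1 := Finset.mem_erase.mp hi
        have h3 := hk i h1.2
        have : i ≠ m + 1 := fun h => hm1 (h ▸ h1.2)
        omega
      have hlt := ih m (by omega) (S.erase (m+2))
        (fun i hi => h2 i (Finset.mem_of_mem_erase hi)) hb
        (fun j hj => hc j ⟨Finset.mem_of_mem_erase hj.1,
          Finset.mem_of_mem_erase hj.2.1, Finset.mem_of_mem_erase hj.2.2⟩)
      have h5 : trib (m+2) + trib (m+1) ≤ trib (m+2+1) := trib_add_le (m+1)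
      omega
  · match k with
    | 0 =>
      have : S = ∅ := Finset.eq_empty_iff_forall_notMem.mpr
        (fun i hi => by have := h2 i hi; have := hk i hi; omega)
      subst this
      simp [trib]
    | (p+1) =>
      have hb : ∀ i ∈ S, i ≤ p := by
        intro i hi
        have := hk i hi
        have : i ≠ p + 1 := fun h => hkS (h ▸ hi)
        omega
      have hlt := ih p (by omega) S h2 hb hc
      have := trib_le_succ (p+1)
      omega

lemma trib_exists : ∀ n : ℕ, ∃ S : Finset ℕ, (∀ i ∈ S, 2 ≤ i) ∧ n = ∑ i ∈ S, trib i ∧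
    (∀ j, ¬(j ∈ S ∧ j+1 ∈ S ∧ j+2 ∈ S)) := by
  intro n
  induction n using Nat.strong_induction_on with
  | _ n ih =>
  rcases Nat.eq_zero_or_pos n with rfl | hn
  · exact ⟨∅, by simp⟩
  obtain ⟨k, h2k, hspec, hgt⟩ : ∃ k, 2 ≤ k ∧ trib k ≤ n ∧ n < trib (k+1) := by
    have hP2 : trib 2 ≤ n := by simp [trib]; omega
    refine ⟨Nat.findGreatest (fun k => trib k ≤ n) (n+2), ?_, ?_, ?_⟩
    · exact Nat.le_findGreatest (by omega) hP2
    · exact Nat.findGreatest_spec (P := fun k => trib k ≤ n) (m := 2) (n := n+2) (by omega) hP2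
    · have hspec := Nat.findGreatest_spec (P := fun k => trib k ≤ n) (m := 2) (n := n+2) (by omega) hP2
      have hle : Nat.findGreatest (fun k => trib k ≤ n) (n+2) ≤ n + 2 :=
        Nat.findGreatest_le _
      have hklt : Nat.findGreatest (fun k => trib k ≤ n) (n+2) < n + 2 := by
        rcases Nat.lt_or_ge (Nat.findGreatest (fun k => trib k ≤ n) (n+2)) (n+2) with h | h
        · exact h
        · exfalso
          have hkeq : Nat.findGreatest (fun k => trib k ≤ n) (n+2) = n + 2 := by omega
          have := trib_big n
          rw [hkeq] at hspec
          omega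
      have := Nat.findGreatest_is_greatest (P := fun k => trib k ≤ n) (n := n+2)
        (k := Nat.findGreatest (fun k => trib k ≤ n) (n+2) + 1) (by omega) (by omega)
      omega
  have htk1 : 1 ≤ trib k := trib_pos (by omega)
  obtain ⟨S', hS'2, hS'sum, hS'c⟩ := ih (n - trib k) (by omega)
  obtain ⟨m, rfl⟩ : ∃ m, k = m + 2 := ⟨k - 2, by omega⟩
  have hexp : trib (m+3) = trib (m+2) + trib (m+1) + trib m := by simp only [trib]
  have hrest : n - trib (m+2) < trib (m+1) + trib m := by
    have : trib (m+2+1) = trib (m+3) := rfl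
    omega
  have hsmall : ∀ i ∈ S', i < m + 2 := by
    intro i hi
    have h1 := Finset.single_le_sum (f := trib) (fun i _ => Nat.zero_le _) hi
    rw [← hS'sum] at h1
    have h2 := trib_add_le m
    by_contra h
    have : trib (m+2) ≤ trib i := trib_mono (by omega)
    omega
  have hkS' : m + 2 ∉ S' := fun h => by have := hsmall _ h; omega
  refine ⟨insert (m+2) S', ?_, ?_, ?_⟩
  · intro i hi
    rcases Finset.mem_insert.mp hi with rfl | hi
    · omega
    · exact hS'2 i hi
  · rw [Finset.sum_insert hkS']
    omega
  · rintro j ⟨hj, hj1, hj2⟩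
    have hle : ∀ i ∈ insert (m+2) S', i ≤ m + 2 := by
      intro i hi
      rcases Finset.mem_insert.mp hi with rfl | hi
      · omega
      · have := hsmall i hi; omega
    have hj2le := hle _ hj2
    rcases Finset.mem_insert.mp hj with rfl | hjS
    · omega
    rcases Finset.mem_insert.mp hj1 with h | hj1S
    · omega
    rcases Finset.mem_insert.mp hj2 with h | hj2S
    · -- j + 2 = m + 2, so j = m, j+1 = m+1 both in S'
      have hjm : j = m := by omega
      subst hjm
      have hsub : {j, j+1} ⊆ S' := by
        intro x hx
        rcases Finset.mem_insert.mp hx with rfl | hx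
        · exact hjS
        · rw [Finset.mem_singleton] at hx
          rw [hx]
          exact hj1S
      have hpair : ∑ i ∈ ({j, j+1} : Finset ℕ), trib i = trib j + trib (j+1) :=
        Finset.sum_pair (by omega)
      have hsum2 : trib j + trib (j+1) ≤ ∑ i ∈ S', trib i := by
        rw [← hpair]
        exact Finset.sum_le_sum_of_subset hsub
      rw [← hS'sum] at hsum2
      omega
    · have := hsmall _ hj2S
      exact hS'c j ⟨hjS, hj1S, hj2S⟩

lemma trib_unique : ∀ n : ℕ, ∀ S T : Finset ℕ,
    (∀ i ∈ S, 2 ≤ i) → n = ∑ i ∈ S, trib i → (∀ j, ¬(j ∈ S ∧ j+1 ∈ S ∧ j+2 ∈ S)) →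
    (∀ i ∈ T, 2 ≤ i) → n = ∑ i ∈ T, trib i → (∀ j, ¬(j ∈ T ∧ j+1 ∈ T ∧ j+2 ∈ T)) →
    S = T := by
  intro n
  induction n using Nat.strong_induction_on with
  | _ n ih =>
  intro S T hS2 hSsum hSc hT2 hTsum hTc
  rcases Nat.eq_zero_or_pos n with rfl | hn
  · have hempty : ∀ U : Finset ℕ, (∀ i ∈ U, 2 ≤ i) → (0 : ℕ) = ∑ i ∈ U, trib i → U = ∅ := by
      intro U hU2 hUsum
      rw [Finset.eq_empty_iff_forall_notMem]
      intro i hi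
      have h1 := Finset.single_le_sum (f := trib) (fun i _ => Nat.zero_le _) hi
      have h2 := trib_pos (n := i) (by have := hU2 i hi; omega)
      omega
    rw [hempty S hS2 hSsum, hempty T hT2 hTsum]
  · have hSne : S.Nonempty := by
      rcases S.eq_empty_or_nonempty with rfl | h
      · simp at hSsum; omega
      · exact h
    have hTne : T.Nonempty := by
      rcases T.eq_empty_or_nonempty with rfl | h
      · simp at hTsum; omega
      · exact h
    obtain ⟨a, haS, haMax⟩ : ∃ a, a ∈ S ∧ ∀ i ∈ S, i ≤ a :=
      ⟨S.max' hSne, S.max'_mem hSne, fun i hi => S.le_max' i hi⟩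
    obtain ⟨b, hbT, hbMax⟩ : ∃ b, b ∈ T ∧ ∀ i ∈ T, i ≤ b :=
      ⟨T.max' hTne, T.max'_mem hTne, fun i hi => T.le_max' i hi⟩
    have h1 : trib a ≤ n := hSsum ▸ Finset.single_le_sum (f := trib) (fun i _ => Nat.zero_le _) haS
    have h2 : trib b ≤ n := hTsum ▸ Finset.single_le_sum (f := trib) (fun i _ => Nat.zero_le _) hbT
    have h3 : n < trib (a+1) := hSsum ▸ sum_lt_trib a S hS2 haMax hSc
    have h4 : n < trib (b+1) := hTsum ▸ sum_lt_trib b T hT2 hbMax hTc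
    have hab : a = b := by
      by_contra h
      rcases Nat.lt_or_ge a b with hl | hg
      · have : trib (a+1) ≤ trib b := trib_mono (by omega)
        omega
      · have : trib (b+1) ≤ trib a := trib_mono (by omega)
        omega
    subst hab
    have ha2 : 2 ≤ a := hS2 a haS
    have htpos : 1 ≤ trib a := trib_pos (by omega)
    have eS : trib a + ∑ i ∈ S.erase a, trib i = ∑ i ∈ S, trib i :=
      Finset.add_sum_erase _ _ haS
    have eT : trib a + ∑ i ∈ T.erase a, trib i = ∑ i ∈ T, trib i :=
      Finset.add_sum_erase _ _ hbT
    have heq : S.erase a = T.erase a := by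
      apply ih (n - trib a) (by omega)
      · exact fun i hi => hS2 i (Finset.mem_of_mem_erase hi)
      · omega
      · exact fun j hj => hSc j ⟨Finset.mem_of_mem_erase hj.1,
          Finset.mem_of_mem_erase hj.2.1, Finset.mem_of_mem_erase hj.2.2⟩
      · exact fun i hi => hT2 i (Finset.mem_of_mem_erase hi)
      · omega
      · exact fun j hj => hTc j ⟨Finset.mem_of_mem_erase hj.1,
          Finset.mem_of_mem_erase hj.2.1, Finset.mem_of_mem_erase hj.2.2⟩
    calc S = insert a (S.erase a) := (Finset.insert_erase haS).symm
      _ = insert a (T.erase a) := by rw [heq]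
      _ = T := Finset.insert_erase hbT

theorem stmt_3 (n : ℕ) :
    ∃! S : Finset ℕ,
      (∀ i ∈ S, 2 ≤ i) ∧
      n = ∑ i ∈ S, trib i ∧
      ¬ ∃ j, j ∈ S ∧ j + 1 ∈ S ∧ j + 2 ∈ S := by
  obtain ⟨S, h2, hsum, hc⟩ := trib_exists n
  refine ⟨S, ⟨h2, hsum, fun ⟨j, hj⟩ => hc j hj⟩, ?_⟩
  rintro T ⟨hT2, hTsum, hTc⟩
  exact trib_unique n T S hT2 hTsum (fun j hj => hTc ⟨j, hj⟩) h2 hsum hc
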